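/- Let (Z_k)_{k≥0} be a stationary Gaussian sequence with E[Z_0^2] < ∞, let λ > 0, let q be an even positive integer, and set R_{P,q}(λ, Z_k) := (Z_k − e^{−λk} Z_0)^q − Z_k^q. Then for every p ≥ 1 there exists a constant c(λ, q) depending on λ, q and E[Z_0^2] such that ‖(1/n) Σ_{k=0}^{n−1} R_{P,q}(λ, Z_k)‖_{L^p(Ω)} ≤ c(λ, q)/n for all n ≥ 1. -/

import Mathlib

open MeasureTheory ProbabilityTheory Real Finset
open scoped ENNReal NNReal

lemma aux_bound (A B t : ℝ) (ht0 : 0 ≤ t) (ht1 : t ≤ 1) (q : ℕ) (hq0 : 0 < q) :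
    |(A - t * B) ^ q - A ^ q| ≤ t * (2 ^ q * (|A| ^ q + |B| ^ q)) := by
  have h1 : (A - t * B) ^ q
      = ∑ k ∈ range (q + 1), A ^ k * (-(t * B)) ^ (q - k) * (q.choose k) := by
    rw [sub_eq_add_neg]; exact add_pow A (-(t * B)) q
  rw [Finset.sum_range_succ] at h1
  simp only [Nat.sub_self, pow_zero, Nat.choose_self, Nat.cast_one, mul_one] at h1
  have h2 : (A - t * B) ^ q - A ^ q
      = ∑ k ∈ range q, A ^ k * (-(t * B)) ^ (q - k) * (q.choose k) := by
    rw [h1]; ring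
  rw [h2]
  calc |∑ k ∈ range q, A ^ k * (-(t * B)) ^ (q - k) * (q.choose k)|
      ≤ ∑ k ∈ range q, |A ^ k * (-(t * B)) ^ (q - k) * (q.choose k)| :=
        Finset.abs_sum_le_sum_abs _ _
    _ ≤ ∑ k ∈ range q, t * (|A| ^ k * |B| ^ (q - k) * (q.choose k)) := by
        refine Finset.sum_le_sum fun k hk => ?_
        rw [Finset.mem_range] at hk
        have hqk : 1 ≤ q - k := by omega
        have habs : |A ^ k * (-(t * B)) ^ (q - k) * (q.choose k)|
            = |A| ^ k * (t ^ (q - k) * |B| ^ (q - k)) * (q.choose k) := by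
          rw [abs_mul, abs_mul, abs_pow, abs_pow, abs_neg, abs_mul, mul_pow,
            abs_of_nonneg ht0, Nat.abs_cast]
        rw [habs]
        have ht' : t ^ (q - k) ≤ t := by
          calc t ^ (q - k) ≤ t ^ 1 := pow_le_pow_of_le_one ht0 ht1 hqk
            _ = t := pow_one t
        have : |A| ^ k * (t ^ (q - k) * |B| ^ (q - k)) * (q.choose k)
            ≤ |A| ^ k * (t * |B| ^ (q - k)) * (q.choose k) := by
          have := mul_le_mul_of_nonneg_right ht' (pow_nonneg (abs_nonneg B) (q-k))
          have := mul_le_mul_of_nonneg_left this (pow_nonneg (abs_nonneg A) k)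
          exact mul_le_mul_of_nonneg_right this (Nat.cast_nonneg _)
        refine this.trans (le_of_eq ?_)
        ring
    _ = t * ∑ k ∈ range q, |A| ^ k * |B| ^ (q - k) * (q.choose k) := by
        rw [Finset.mul_sum]
    _ ≤ t * (2 ^ q * (|A| ^ q + |B| ^ q)) := by
        refine mul_le_mul_of_nonneg_left ?_ ht0
        have hsub : ∑ k ∈ range q, |A| ^ k * |B| ^ (q - k) * (q.choose k)
            ≤ ∑ k ∈ range (q + 1), |A| ^ k * |B| ^ (q - k) * (q.choose k) :=
          Finset.sum_le_sum_of_subset_of_nonneg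
            (Finset.range_subset_range.mpr (Nat.le_succ q))
            (fun k _ _ => by positivity)
        have hpow : ∑ k ∈ range (q + 1), |A| ^ k * |B| ^ (q - k) * (q.choose k)
            = (|A| + |B|) ^ q := (add_pow |A| |B| q).symm
        refine hsub.trans ?_
        rw [hpow]
        have h3 : |A| + |B| ≤ 2 * max |A| |B| := by
          rw [two_mul]; exact add_le_add (le_max_left _ _) (le_max_right _ _)
        calc (|A| + |B|) ^ q ≤ (2 * max |A| |B|) ^ q :=
              pow_le_pow_left₀ (by positivity) h3 q
          _ = 2 ^ q * (max |A| |B|) ^ q := mul_pow 2 _ q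
          _ ≤ 2 ^ q * (|A| ^ q + |B| ^ q) := by
              refine mul_le_mul_of_nonneg_left ?_ (by positivity)
              rcases max_cases |A| |B| with ⟨h, _⟩ | ⟨h, _⟩ <;> rw [h]
              · exact le_add_of_nonneg_right (by positivity)
              · exact le_add_of_nonneg_left (by positivity)


lemma gauss_memLp (v : NNReal) (N : ℕ) (hN : N ≠ 0) :
    MemLp (fun x : ℝ => x) (N : ℝ≥0∞) (gaussianReal 0 v) := by
  have hN0 : ((N : ℝ≥0∞) : ℝ≥0∞) ≠ 0 := by exact_mod_cast hN
  have hNt : (N : ℝ≥0∞) ≠ ∞ := by simp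
  by_cases hv : v = 0
  · subst hv
    rw [gaussianReal_zero_var]
    refine ⟨aestronglyMeasurable_id, ?_⟩
    rw [eLpNorm_eq_lintegral_rpow_enorm_toReal hN0 hNt]
    rw [lintegral_dirac]
    simp only [enorm_zero]
    rw [ENNReal.zero_rpow_of_pos (by simp [Nat.pos_of_ne_zero hN]),
      ENNReal.zero_rpow_of_pos (by simp [Nat.pos_of_ne_zero hN])]
    exact ENNReal.zero_lt_top
  · refine ⟨aestronglyMeasurable_id, ?_⟩
    rw [eLpNorm_eq_lintegral_rpow_enorm_toReal hN0 hNt]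
    refine ENNReal.rpow_lt_top_of_nonneg (by positivity) ?_
    have hvpos : (0:ℝ) < (v:ℝ) := by positivity
    have hb0 : (0:ℝ) < (2 * (v:ℝ))⁻¹ := by positivity
    set b : ℝ := (2 * (v:ℝ))⁻¹ with hbdef
    -- the dominating integrable function
    have hint2 : Integrable (fun x : ℝ => x ^ (2 * N) * Real.exp (-b * x ^ 2)) := by
      have h := integrable_rpow_mul_exp_neg_mul_sq hb0
        (s := ((2 * N : ℕ) : ℝ)) (lt_of_lt_of_le neg_one_lt_zero (by positivity))
      simpa only [Real.rpow_natCast] using h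
    have hint : Integrable (fun x : ℝ =>
        (Real.sqrt (2 * Real.pi * v))⁻¹ * ((1 + x ^ (2 * N)) * Real.exp (-b * x ^ 2))) := by
      refine Integrable.const_mul ?_ _
      have : (fun x : ℝ => (1 + x ^ (2 * N)) * Real.exp (-b * x ^ 2))
          = fun x => Real.exp (-b * x ^ 2) + x ^ (2 * N) * Real.exp (-b * x ^ 2) := by
        funext x; ring
      rw [this]
      exact (integrable_exp_neg_mul_sq hb0).add hint2
    have hg_meas : Measurable (fun x : ℝ => gaussianPDFReal 0 v x * |x| ^ N) :=
      (measurable_gaussianPDFReal 0 v).mul ((measurable_norm.comp measurable_id).pow_const N)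
    have hg_nn : ∀ x : ℝ, 0 ≤ gaussianPDFReal 0 v x * |x| ^ N := fun x =>
      mul_nonneg (gaussianPDFReal_nonneg 0 v x) (by positivity)
    have hgi : Integrable (fun x : ℝ => gaussianPDFReal 0 v x * |x| ^ N) := by
      refine hint.mono' hg_meas.aestronglyMeasurable (Filter.Eventually.of_forall fun x => ?_)
      rw [Real.norm_eq_abs, abs_of_nonneg (hg_nn x)]
      rw [gaussianPDFReal]
      have hexp : Real.exp (-(x - 0) ^ 2 / (2 * (v:ℝ))) = Real.exp (-b * x ^ 2) := by
        congr 1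
        rw [hbdef]
        field_simp
        ring
      rw [hexp]
      have hpdf : (Real.sqrt (2 * Real.pi * v))⁻¹ * Real.exp (-b * x ^ 2) * |x| ^ N
          = (Real.sqrt (2 * Real.pi * v))⁻¹ * (|x| ^ N * Real.exp (-b * x ^ 2)) := by ring
      rw [hpdf]
      refine mul_le_mul_of_nonneg_left ?_ (by positivity)
      refine mul_le_mul_of_nonneg_right ?_ (Real.exp_nonneg _)
      -- |x|^N ≤ 1 + x^(2N)
      have hx2 : x ^ (2 * N) = |x| ^ (2 * N) := by
        rw [← abs_pow, abs_of_nonneg (even_two_mul N |>.pow_nonneg x)]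
      rcases le_or_gt |x| 1 with h | h
      · have : |x| ^ N ≤ 1 := pow_le_one₀ (abs_nonneg x) h
        nlinarith [pow_nonneg (abs_nonneg x) (2 * N)]
      · have : |x| ^ N ≤ |x| ^ (2 * N) :=
          pow_le_pow_right₀ h.le (by omega)
        rw [hx2]; nlinarith
    -- compute the lintegral
    rw [gaussianReal_of_var_ne_zero 0 hv]
    have hgm : Measurable fun x : ℝ => ‖x‖ₑ ^ ((N : ℝ≥0∞)).toReal :=
      measurable_id.enorm.pow_const _
    rw [lintegral_withDensity_eq_lintegral_mul _ (measurable_gaussianPDF 0 v) hgm]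
    have hkey : (gaussianPDF 0 v * fun x : ℝ => ‖x‖ₑ ^ ((N : ℝ≥0∞)).toReal)
        = fun x : ℝ => ENNReal.ofReal (gaussianPDFReal 0 v x * |x| ^ N) := by
      funext x
      simp only [Pi.mul_apply, gaussianPDF]
      rw [ENNReal.ofReal_mul (gaussianPDFReal_nonneg 0 v x)]
      congr 1
      rw [← ofReal_norm,
        ENNReal.ofReal_rpow_of_nonneg (norm_nonneg x) (by positivity)]
      congr 1
      rw [Real.norm_eq_abs]; rw [show ((N : ℝ≥0∞)).toReal = (N : ℝ) by simp, Real.rpow_natCast]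
    rw [hkey]
    rw [← ofReal_integral_eq_lintegral_ofReal hgi (Filter.Eventually.of_forall hg_nn)]
    exact ENNReal.ofReal_ne_top


theorem Lp_rate_power_remainder_sum
    {Ω : Type*} [MeasureSpace Ω] [IsProbabilityMeasure (ℙ : Measure Ω)]
    (Z : ℕ → Ω → ℝ) (hmeas : ∀ k, Measurable (Z k))
    (hGauss : ∀ (s : Finset ℕ) (c : ℕ → ℝ), ∃ v : NNReal,
      Measure.map (fun ω => ∑ i ∈ s, c i * Z i ω) ℙ = gaussianReal 0 v)
    (hStat : ∀ m : ℕ, Measure.map (fun ω (i : ℕ) => Z (i + m) ω) ℙ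
      = Measure.map (fun ω (i : ℕ) => Z i ω) ℙ)
    (hL2 : Integrable (fun ω => (Z 0 ω) ^ 2) ℙ)
    (lam : ℝ) (hlam : 0 < lam) (q : ℕ) (hq : Even q) (hq0 : 0 < q) :
    ∀ p : ℝ, 1 ≤ p → ∃ c : ℝ, 0 < c ∧ ∀ n : ℕ, 1 ≤ n →
      (∫ ω, |(1 / (n : ℝ)) * ∑ k ∈ Finset.range n,
          ((Z k ω - Real.exp (-lam * k) * Z 0 ω) ^ q - (Z k ω) ^ q)| ^ p ∂ℙ) ^ (1 / p)
      ≤ c / n := by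
  intro p hp
  have hp0 : (0:ℝ) < p := lt_of_lt_of_le one_pos hp
  set pe : ℝ≥0∞ := ENNReal.ofReal p with hpe
  have hpe1 : 1 ≤ pe := ENNReal.one_le_ofReal.mpr hp
  have hpe0 : pe ≠ 0 := (lt_of_lt_of_le zero_lt_one hpe1).ne'
  have hpet : pe ≠ ∞ := ENNReal.ofReal_ne_top
  have hpto : pe.toReal = p := ENNReal.toReal_ofReal hp0.le
  -- the one-dimensional law
  obtain ⟨v, hv⟩ := hGauss {0} (fun _ => 1)
  have hlaw0 : Measure.map (Z 0) ℙ = gaussianReal 0 v := by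
    have he : (fun ω => ∑ i ∈ ({0} : Finset ℕ), (1:ℝ) * Z i ω) = Z 0 := by
      funext ω; simp
    rwa [he] at hv
  have hmeask : ∀ m : ℕ, Measurable (fun ω (i : ℕ) => Z (i + m) ω) := fun m =>
    measurable_pi_lambda _ fun i => hmeas (i + m)
  have hlaw : ∀ k, Measure.map (Z k) ℙ = Measure.map (Z 0) ℙ := by
    intro k
    have h1 : Measure.map (fun g : ℕ → ℝ => g 0)
        (Measure.map (fun ω (i : ℕ) => Z (i + k) ω) ℙ) = Measure.map (Z k) ℙ := by
      rw [Measure.map_map (measurable_pi_apply 0) (hmeask k)]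
      congr 1
      funext ω
      simp [Function.comp]
    have h2 : Measure.map (fun g : ℕ → ℝ => g 0)
        (Measure.map (fun ω (i : ℕ) => Z i ω) ℙ) = Measure.map (Z 0) ℙ := by
      rw [Measure.map_map (measurable_pi_apply 0)
        (measurable_pi_lambda _ fun i => hmeas i)]
      rfl
    rw [← h1, hStat k, h2]
  -- moment bounds
  set N : ℕ := q * ⌈p⌉₊ with hN
  have hNne : N ≠ 0 :=
    Nat.mul_ne_zero hq0.ne' (Nat.ceil_pos.mpr hp0).ne'
  have hZmem : ∀ k, MemLp (Z k) (N : ℝ≥0∞) ℙ := by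
    intro k
    have h := gauss_memLp v N hNne
    have h2 : MemLp (fun x : ℝ => x) (N : ℝ≥0∞) (Measure.map (Z k) ℙ) := by
      rw [hlaw k, hlaw0]; exact h
    have h3 := (memLp_map_measure_iff h2.aestronglyMeasurable
      (hmeas k).aemeasurable).mp h2
    exact h3
  have hle : pe * ENNReal.ofReal q ≤ (N : ℝ≥0∞) := by
    rw [hpe, ← ENNReal.ofReal_mul hp0.le, ← ENNReal.ofReal_natCast N]
    refine ENNReal.ofReal_le_ofReal ?_
    calc p * q ≤ (⌈p⌉₊ : ℝ) * q := by
          have := Nat.le_ceil p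
          gcongr
      _ = (N : ℝ) := by rw [hN]; push_cast; ring
  have hZq : MemLp (Z 0) (pe * ENNReal.ofReal q) ℙ :=
    (hZmem 0).mono_exponent hle
  -- the moment constant
  set M : ℝ≥0∞ := eLpNorm (fun ω => |Z 0 ω| ^ q) pe ℙ with hM
  have hgr : ∀ f : Ω → ℝ, (fun ω => |f ω| ^ q) = fun ω => ‖f ω‖ ^ (q : ℝ) := by
    intro f; funext ω; rw [Real.norm_eq_abs, Real.rpow_natCast]
  have hMlt : M < ∞ := by
    rw [hM, hgr (Z 0), eLpNorm_norm_rpow _ (by positivity : (0:ℝ) < q)]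
    exact ENNReal.rpow_lt_top_of_nonneg (by positivity) hZq.2.ne
  have hgmeas : Measurable fun x : ℝ => |x| ^ q :=
    (continuous_abs.pow q).measurable
  have hMk : ∀ k, eLpNorm (fun ω => |Z k ω| ^ q) pe ℙ = M := by
    intro k
    have hasm : ∀ j, AEStronglyMeasurable (fun x : ℝ => |x| ^ q)
        (Measure.map (Z j) ℙ) := fun j => hgmeas.aestronglyMeasurable
    calc eLpNorm (fun ω => |Z k ω| ^ q) pe ℙ
        = eLpNorm ((fun x : ℝ => |x| ^ q) ∘ Z k) pe ℙ := rfl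
      _ = eLpNorm (fun x : ℝ => |x| ^ q) pe (Measure.map (Z k) ℙ) :=
          (eLpNorm_map_measure (hasm k) (hmeas k).aemeasurable).symm
      _ = eLpNorm (fun x : ℝ => |x| ^ q) pe (Measure.map (Z 0) ℙ) := by rw [hlaw k]
      _ = eLpNorm ((fun x : ℝ => |x| ^ q) ∘ Z 0) pe ℙ :=
          eLpNorm_map_measure (hasm 0) (hmeas 0).aemeasurable
      _ = M := rfl
  -- geometric constants
  set r : ℝ := Real.exp (-lam) with hrdef
  have hr0 : 0 < r := Real.exp_pos _
  have hr1 : r < 1 := by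
    rw [hrdef, ← Real.exp_zero]
    exact Real.exp_lt_exp.mpr (by linarith)
  set S : ℝ := (1 - r)⁻¹ with hSdef
  have hS0 : 0 < S := by rw [hSdef]; exact inv_pos.mpr (by linarith)
  set K : ℝ≥0∞ := ENNReal.ofReal (2 ^ q) * (M + M) with hK
  have hKlt : K < ∞ := ENNReal.mul_lt_top ENNReal.ofReal_lt_top
    (ENNReal.add_lt_top.mpr ⟨hMlt, hMlt⟩)
  refine ⟨S * K.toReal + 1,
    add_pos_of_nonneg_of_pos (mul_nonneg hS0.le ENNReal.toReal_nonneg) one_pos, ?_⟩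
  intro n hn
  have hn0 : (0:ℝ) < n := by exact_mod_cast hn
  -- the remainder functions
  set R : ℕ → Ω → ℝ :=
    fun k ω => (Z k ω - Real.exp (-lam * k) * Z 0 ω) ^ q - Z k ω ^ q with hRdef
  have hRmeas : ∀ k, Measurable (R k) := fun k =>
    (((hmeas k).sub ((hmeas 0).const_mul _)).pow_const q).sub ((hmeas k).pow_const q)
  -- per-term bound
  have hRle : ∀ k, eLpNorm (R k) pe ℙ
      ≤ ENNReal.ofReal (r ^ k) * K := by
    intro k
    have hexpk : Real.exp (-lam * k) = r ^ k := by
      rw [hrdef, ← Real.exp_nat_mul]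
      ring_nf
    have ht0 : (0:ℝ) ≤ Real.exp (-lam * k) := (Real.exp_pos _).le
    have ht1 : Real.exp (-lam * k) ≤ 1 := by
      rw [← Real.exp_zero]
      refine Real.exp_le_exp.mpr ?_
      have : (0:ℝ) ≤ (k:ℝ) := Nat.cast_nonneg k
      nlinarith
    have hptw : ∀ ω, ‖R k ω‖ ≤
        (r ^ k * 2 ^ q) * (|Z k ω| ^ q + |Z 0 ω| ^ q) := by
      intro ω
      simp only [hRdef, Real.norm_eq_abs]
      calc |(Z k ω - Real.exp (-lam * k) * Z 0 ω) ^ q - Z k ω ^ q|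
          ≤ Real.exp (-lam * k) * (2 ^ q * (|Z k ω| ^ q + |Z 0 ω| ^ q)) :=
            aux_bound (Z k ω) (Z 0 ω) (Real.exp (-lam * k)) ht0 ht1 q hq0
        _ = (r ^ k * 2 ^ q) * (|Z k ω| ^ q + |Z 0 ω| ^ q) := by rw [hexpk]; ring
    have hW : ((fun ω => |Z k ω| ^ q) + fun ω => |Z 0 ω| ^ q)
        = fun ω => |Z k ω| ^ q + |Z 0 ω| ^ q := rfl
    calc eLpNorm (R k) pe ℙ
        ≤ eLpNorm ((r ^ k * 2 ^ q) •
            ((fun ω => |Z k ω| ^ q) + fun ω => |Z 0 ω| ^ q)) pe ℙ := by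
          refine eLpNorm_mono_real fun ω => ?_
          rw [hW]
          simp only [Pi.smul_apply, smul_eq_mul]
          exact hptw ω
      _ = ‖(r ^ k * 2 ^ q : ℝ)‖ₑ *
            eLpNorm ((fun ω => |Z k ω| ^ q) + fun ω => |Z 0 ω| ^ q) pe ℙ :=
          eLpNorm_const_smul _ _ _ _
      _ ≤ ENNReal.ofReal (r ^ k) * K := by
          have hns : ‖(r ^ k * 2 ^ q : ℝ)‖ₑ
              = ENNReal.ofReal (r ^ k) * ENNReal.ofReal (2 ^ q) := by
            rw [← ofReal_norm, Real.norm_eq_abs,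
              abs_of_nonneg (by positivity), ENNReal.ofReal_mul (by positivity)]
          rw [hns, hK]
          have hadd : eLpNorm ((fun ω => |Z k ω| ^ q) + fun ω => |Z 0 ω| ^ q) pe ℙ
              ≤ M + M := by
            refine le_trans (eLpNorm_add_le
              ((hmeas k).abs.pow_const q).aestronglyMeasurable
              ((hmeas 0).abs.pow_const q).aestronglyMeasurable hpe1) ?_
            rw [hMk k, hM]
          calc ENNReal.ofReal (r ^ k) * ENNReal.ofReal (2 ^ q) *
                eLpNorm ((fun ω => |Z k ω| ^ q) + fun ω => |Z 0 ω| ^ q) pe ℙ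
              ≤ ENNReal.ofReal (r ^ k) * ENNReal.ofReal (2 ^ q) * (M + M) := by
                exact mul_le_mul_right hadd _
            _ = ENNReal.ofReal (r ^ k) * (ENNReal.ofReal (2 ^ q) * (M + M)) := by
                rw [mul_assoc]
  -- sum bound
  have hsum : eLpNorm (fun ω => ∑ k ∈ Finset.range n, R k ω) pe ℙ
      ≤ ENNReal.ofReal S * K := by
    have hps : (fun ω => ∑ k ∈ Finset.range n, R k ω)
        = ∑ k ∈ Finset.range n, R k := by
      funext ω; simp
    rw [hps]
    refine le_trans (eLpNorm_sum_le
      (fun i _ => (hRmeas i).aestronglyMeasurable) hpe1) ?_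
    calc ∑ k ∈ Finset.range n, eLpNorm (R k) pe ℙ
        ≤ ∑ k ∈ Finset.range n, ENNReal.ofReal (r ^ k) * K :=
          Finset.sum_le_sum fun k _ => hRle k
      _ = (∑ k ∈ Finset.range n, ENNReal.ofReal (r ^ k)) * K := by
          rw [Finset.sum_mul]
      _ ≤ ENNReal.ofReal S * K := by
          refine mul_le_mul_left ?_ K
          rw [← ENNReal.ofReal_sum_of_nonneg (fun k _ => by positivity)]
          refine ENNReal.ofReal_le_ofReal ?_
          calc ∑ k ∈ Finset.range n, r ^ k
              ≤ ∑' k : ℕ, r ^ k :=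
                Summable.sum_le_tsum _ (fun k _ => by positivity)
                  (summable_geometric_of_lt_one hr0.le hr1)
            _ = S := by rw [tsum_geometric_of_lt_one hr0.le hr1, hSdef]
  -- full bound
  set Fn : Ω → ℝ := fun ω => (1 / (n:ℝ)) * ∑ k ∈ Finset.range n, R k ω with hFdef
  have hFsmul : Fn = (1 / (n:ℝ)) • fun ω => ∑ k ∈ Finset.range n, R k ω := by
    funext ω; simp [hFdef]
  have hFmeas : Measurable Fn := by
    rw [hFdef]
    exact (Finset.measurable_sum _ fun k _ => hRmeas k).const_mul _
  have hfinal : eLpNorm Fn pe ℙ ≤ ENNReal.ofReal (1 / n) * (ENNReal.ofReal S * K) := by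
    rw [hFsmul, eLpNorm_const_smul]
    have h1n : ‖(1 / (n:ℝ))‖ₑ = ENNReal.ofReal (1 / n) := by
      rw [← ofReal_norm, Real.norm_eq_abs, abs_of_nonneg (by positivity)]
    rw [h1n]
    exact mul_le_mul_right hsum _
  have hrhs_ne : ENNReal.ofReal (1 / n) * (ENNReal.ofReal S * K) ≠ ∞ :=
    (ENNReal.mul_lt_top ENNReal.ofReal_lt_top
      (ENNReal.mul_lt_top ENNReal.ofReal_lt_top hKlt)).ne
  have hFmem : MemLp Fn pe ℙ :=
    ⟨hFmeas.aestronglyMeasurable, lt_of_le_of_lt hfinal (lt_of_le_of_ne le_top hrhs_ne)⟩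
  have hLHS : (∫ ω, |Fn ω| ^ p ∂ℙ) ^ (1 / p) = (eLpNorm Fn pe ℙ).toReal := by
    rw [hFmem.eLpNorm_eq_integral_rpow_norm hpe0 hpet]
    rw [ENNReal.toReal_ofReal (Real.rpow_nonneg
      (integral_nonneg fun ω => Real.rpow_nonneg (norm_nonneg _) _) _)]
    simp only [Real.norm_eq_abs, hpto, one_div]
  show (∫ ω, |Fn ω| ^ p ∂ℙ) ^ (1 / p) ≤ (S * K.toReal + 1) / n
  rw [hLHS]
  calc (eLpNorm Fn pe ℙ).toReal
      ≤ (ENNReal.ofReal (1 / n) * (ENNReal.ofReal S * K)).toReal :=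
        ENNReal.toReal_mono hrhs_ne hfinal
    _ = (1 / n) * (S * K.toReal) := by
        rw [ENNReal.toReal_mul, ENNReal.toReal_mul,
          ENNReal.toReal_ofReal (by positivity : (0:ℝ) ≤ 1 / (n:ℝ)),
          ENNReal.toReal_ofReal hS0.le]
    _ = (S * K.toReal) / n := by ring
    _ ≤ (S * K.toReal + 1) / n := by
        gcongr
        linarith
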